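/- Let a > 0, 0 < λ < 1, 0 < η < 1, and let C be the 4×4 cost matrix [[A,0,0,γ],[0,B,δ,0],[0,δ,C',0],[γ,0,0,D]] with A = 2a²(1−λ)/(1+λ), B = C' = a²((1−λ)/(1+λ) + (1+λ)/(1−λ)), D = 2a²(1+λ)/(1−λ), γ = −2a²(1−λ²)/ (1−λ²) = −2a², δ = −2a²(1+λ²)/(1−λ²) (the cost matrix with b = a, μ = λ). Then trace(C · Q_c) = 2ηa², where Q_c is the quantized classical coupling matrix with parameters λ, η. -/

import Mathlib

theorem trace_C_Qc (a lam eta : ℝ) (ha : 0 < a) (hlam : 0 < lam) (hlam1 : lam < 1)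
    (heta : 0 < eta) (heta1 : eta < 1) :
    let C : Matrix (Fin 4) (Fin 4) ℝ :=
      !![2 * a ^ 2 * (1 - lam) / (1 + lam), 0, 0, -2 * a ^ 2;
         0, a ^ 2 * ((1 - lam) / (1 + lam) + (1 + lam) / (1 - lam)),
           -2 * a ^ 2 * (1 + lam ^ 2) / (1 - lam ^ 2), 0;
         0, -2 * a ^ 2 * (1 + lam ^ 2) / (1 - lam ^ 2),
           a ^ 2 * ((1 - lam) / (1 + lam) + (1 + lam) / (1 - lam)), 0;
         -2 * a ^ 2, 0, 0, 2 * a ^ 2 * (1 + lam) / (1 - lam)]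
    let Qc : Matrix (Fin 4) (Fin 4) ℝ :=
      !![(1 + lam) ^ 2 / 4, 0,
           eta * Real.sqrt (1 - lam) * (1 + lam) * Real.sqrt (1 + lam) / 4,
           (eta - 1) * (lam ^ 2 - 1) / 4;
         0, (1 - lam ^ 2) / 4, (eta - 1) * (lam ^ 2 - 1) / 4,
           eta * (1 - lam) * Real.sqrt (1 - lam) * Real.sqrt (1 + lam) / 4;
         eta * Real.sqrt (1 - lam) * (1 + lam) * Real.sqrt (1 + lam) / 4,
           (eta - 1) * (lam ^ 2 - 1) / 4, (1 - lam ^ 2) / 4, 0;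
         (eta - 1) * (lam ^ 2 - 1) / 4,
           eta * (1 - lam) * Real.sqrt (1 - lam) * Real.sqrt (1 + lam) / 4, 0,
           (1 - lam) ^ 2 / 4]
    (C * Qc).trace = 2 * eta * a ^ 2 := by
  intro C Qc
  have h1 : (1 : ℝ) + lam ≠ 0 := by nlinarith
  have h2 : (1 : ℝ) - lam ≠ 0 := by nlinarith
  have h3 : (1 : ℝ) - lam ^ 2 ≠ 0 := by nlinarith
  have h4 : (4 : ℝ) - lam ^ 2 * 4 ≠ 0 := by nlinarith
  simp only [C, Qc, Matrix.trace, Matrix.diag, Matrix.mul_apply, Fin.sum_univ_four, Matrix.of_apply,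
    Matrix.cons_val', Matrix.cons_val_zero, Matrix.cons_val_one, Matrix.head_cons,
    Matrix.empty_val', Matrix.cons_val_fin_one, Matrix.head_fin_const,
    Matrix.cons_val_two, Matrix.tail_cons, Matrix.cons_val_three]
  field_simp
  ring
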